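/- Let v be a point of the Euclidean plane ℝ² and let p₁, …, p₇ be seven pairwise distinct points of ℝ², each different from v. Then there exist indices i ≠ j such that ∠(p_i, v, p_j) < π/3. -/

import Mathlib

open EuclideanGeometry Real

theorem stmt1 (v : EuclideanSpace ℝ (Fin 2)) (p : Fin 7 → EuclideanSpace ℝ (Fin 2))
    (hinj : Function.Injective p) (hne : ∀ i, p i ≠ v) :
    ∃ i j : Fin 7, i ≠ j ∧ EuclideanGeometry.angle (p i) v (p j) < Real.pi / 3 := by
  haveI := Fact.mk (@finrank_euclideanSpace_fin ℝ _ 2)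
  haveI : Module.Oriented ℝ (EuclideanSpace ℝ (Fin 2)) (Fin 2) :=
    ⟨Module.Basis.orientation (EuclideanSpace.basisFun (Fin 2) ℝ).toBasis⟩
  have hpi := Real.pi_pos
  have hd : (0:ℝ) < π / 3 := by linarith
  set θ : Fin 7 → ℝ := fun i => (∡ (p 0) v (p i)).toReal with hθ
  have hθmem : ∀ i, θ i ∈ Set.Ioc (-π) π := fun i => Real.Angle.toReal_mem_Ioc _
  have hmaps : ∀ i ∈ (Finset.univ : Finset (Fin 7)),
      (⌈(θ i + π) / (π / 3)⌉ : ℤ) ∈ Finset.Icc (1 : ℤ) 6 := by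
    intro i _
    have h1 : 0 < θ i + π := by have := (hθmem i).1; linarith
    have h2 : θ i + π ≤ 2 * π := by have := (hθmem i).2; linarith
    rw [Finset.mem_Icc]
    refine ⟨Int.ceil_pos.2 (div_pos h1 hd), ?_⟩
    rw [Int.ceil_le]
    push_cast
    rw [div_le_iff₀ hd]
    linarith
  have hcard : (Finset.Icc (1 : ℤ) 6).card < (Finset.univ : Finset (Fin 7)).card := by decide
  obtain ⟨i, _, j, _, hij, hfeq⟩ :=
    Finset.exists_ne_map_eq_of_card_lt_of_maps_to hcard hmaps
  refine ⟨i, j, hij, ?_⟩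
  have hcoe : ((⌈(θ i + π) / (π / 3)⌉ : ℤ) : ℝ) = ((⌈(θ j + π) / (π / 3)⌉ : ℤ) : ℝ) := by
    exact congrArg Int.cast hfeq
  have hbox : |θ j - θ i| < π / 3 := by
    have hi1 : ((⌈(θ i + π) / (π / 3)⌉ : ℤ) : ℝ) < (θ i + π) / (π / 3) + 1 :=
      Int.ceil_lt_add_one _
    have hi2 : (θ i + π) / (π / 3) ≤ ((⌈(θ i + π) / (π / 3)⌉ : ℤ) : ℝ) := Int.le_ceil _
    have hj1 : ((⌈(θ j + π) / (π / 3)⌉ : ℤ) : ℝ) < (θ j + π) / (π / 3) + 1 :=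
      Int.ceil_lt_add_one _
    have hj2 : (θ j + π) / (π / 3) ≤ ((⌈(θ j + π) / (π / 3)⌉ : ℤ) : ℝ) := Int.le_ceil _
    rw [← hcoe] at hj1 hj2
    have hi2' : θ i + π ≤ ((⌈(θ i + π) / (π / 3)⌉ : ℤ) : ℝ) * (π / 3) :=
      (div_le_iff₀ hd).mp hi2
    have hj2' : θ j + π ≤ ((⌈(θ i + π) / (π / 3)⌉ : ℤ) : ℝ) * (π / 3) :=
      (div_le_iff₀ hd).mp hj2
    have hi1' : (((⌈(θ i + π) / (π / 3)⌉ : ℤ) : ℝ) - 1) * (π / 3) < θ i + π := by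
      rw [← lt_div_iff₀ hd]; linarith
    have hj1' : (((⌈(θ i + π) / (π / 3)⌉ : ℤ) : ℝ) - 1) * (π / 3) < θ j + π := by
      rw [← lt_div_iff₀ hd]; linarith
    rw [abs_sub_lt_iff]
    constructor <;> nlinarith
  have hoang : (∡ (p i) v (p j)) = ((θ j - θ i : ℝ) : Real.Angle) := by
    have hadd := EuclideanGeometry.oangle_add (hne 0) (hne i) (hne j)
    have h1 : ∡ (p i) v (p j) = ∡ (p 0) v (p j) - ∡ (p 0) v (p i) := by
      rw [← hadd]; abel
    rw [h1, ← Real.Angle.coe_toReal (∡ (p 0) v (p j)),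
      ← Real.Angle.coe_toReal (∡ (p 0) v (p i)), ← Real.Angle.coe_sub]
  have hlt : |θ j - θ i| < π := hbox.trans_le (by linarith)
  have htr : ((θ j - θ i : ℝ) : Real.Angle).toReal = θ j - θ i := by
    rw [Real.Angle.toReal_coe_eq_self_iff_mem_Ioc]
    have := abs_lt.mp hlt
    exact ⟨this.1, le_of_lt this.2⟩
  rw [EuclideanGeometry.angle_eq_abs_oangle_toReal (hne i) (hne j), hoang, htr]
  exact hbox
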